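/- For any probability vector p = (p_1,...,p_K) with K ≥ 2 and all p_k > 0, we have Σ_{k=1}^{K−1} √(1/p_k + 1/p_{k+1}) > (K−1)√(2(K−1)). -/
import Mathlib

theorem objective_lower_bound (K : ℕ) (hK : 2 ≤ K)
    (p : Fin K → ℝ) (hp : ∀ k, 0 < p k) (hps : ∑ k, p k = 1) :
    ∑ k : Fin (K - 1),
        Real.sqrt (1 / p ⟨k.1, by have := k.isLt; omega⟩
          + 1 / p ⟨k.1 + 1, by have := k.isLt; omega⟩)
      > ((K : ℝ) - 1) * Real.sqrt (2 * ((K : ℝ) - 1)) := by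
  obtain ⟨n, rfl⟩ : ∃ n, K = n + 1 := ⟨K - 1, by omega⟩
  have hn : 1 ≤ n := by omega
  -- the sum over Fin (K-1) is a sum over Fin n
  have hidx1 : ∀ k : Fin n, (⟨k.1, by omega⟩ : Fin (n+1)) = Fin.castSucc k := fun k => rfl
  have hidx2 : ∀ k : Fin n, (⟨k.1 + 1, by omega⟩ : Fin (n+1)) = Fin.succ k := fun k => rfl
  set s : Fin n → ℝ := fun k => p (Fin.castSucc k) + p (Fin.succ k) with hs_def
  have hs : ∀ k, 0 < s k := fun k => add_pos (hp _) (hp _)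
  have hS : ∑ k, s k < 2 := by
    have h1 : ∑ k : Fin n, p (Fin.castSucc k) = 1 - p (Fin.last n) := by
      have := Fin.sum_univ_castSucc (f := p)
      rw [this] at hps; linarith
    have h2 : ∑ k : Fin n, p (Fin.succ k) = 1 - p 0 := by
      have := Fin.sum_univ_succ (f := p)
      rw [this] at hps; linarith
    have : ∑ k, s k = (1 - p (Fin.last n)) + (1 - p 0) := by
      rw [hs_def, Finset.sum_add_distrib, h1, h2]
    rw [this]
    have := hp (Fin.last n); have := hp 0; linarith
  have hSpos : 0 < ∑ k, s k := Finset.sum_pos (fun k _ => hs k) ⟨⟨0, by omega⟩, Finset.mem_univ _⟩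
  -- B = ∑ √(s k)
  set B : ℝ := ∑ k, Real.sqrt (s k) with hB_def
  have hBpos : 0 < B :=
    Finset.sum_pos (fun k _ => Real.sqrt_pos.mpr (hs k)) ⟨⟨0, by omega⟩, Finset.mem_univ _⟩
  have hB2 : B ^ 2 < (n : ℝ) * 2 := by
    have := sq_sum_le_card_mul_sum_sq (s := Finset.univ) (f := fun k => Real.sqrt (s k))
    have hsq : ∑ k, Real.sqrt (s k) ^ 2 = ∑ k, s k := by
      apply Finset.sum_congr rfl; intro k _; exact Real.sq_sqrt (hs k).le
    rw [hsq] at this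
    simp only [Finset.card_univ, Fintype.card_fin] at this
    calc B ^ 2 ≤ (n : ℝ) * ∑ k, s k := this
      _ < (n : ℝ) * 2 := by
          apply mul_lt_mul_of_pos_left hS
          exact_mod_cast Nat.pos_of_ne_zero (by omega)
  have hBlt : B < Real.sqrt ((n : ℝ) * 2) := by
    have := Real.sqrt_lt_sqrt (sq_nonneg B) hB2
    rwa [Real.sqrt_sq hBpos.le] at this
  -- Sedrakyan: n^2 / B ≤ ∑ 1/√(s k)
  have hA : (n : ℝ) ^ 2 / B ≤ ∑ k, 1 / Real.sqrt (s k) := by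
    have := Finset.sq_sum_div_le_sum_sq_div Finset.univ (fun _ => (1 : ℝ))
      (g := fun k => Real.sqrt (s k)) (fun k _ => Real.sqrt_pos.mpr (hs k))
    simpa using this
  -- each term bound: 2 / √(s k) ≤ √(1/p_k + 1/p_{k+1})
  have hterm : ∀ k : Fin n, 2 / Real.sqrt (s k)
      ≤ Real.sqrt (1 / p (Fin.castSucc k) + 1 / p (Fin.succ k)) := by
    intro k
    set a := p (Fin.castSucc k) with ha
    set b := p (Fin.succ k) with hb
    have hap : 0 < a := hp _
    have hbp : 0 < b := hp _
    have key : 4 / (a + b) ≤ 1 / a + 1 / b := by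
      rw [div_add_div _ _ (ne_of_gt hap) (ne_of_gt hbp), div_le_div_iff₀ (by linarith) (by positivity)]
      nlinarith [sq_nonneg (a - b)]
    have h4 : Real.sqrt (4 / (a + b)) = 2 / Real.sqrt (a + b) := by
      rw [Real.sqrt_div (by norm_num : (0:ℝ) ≤ 4), show Real.sqrt 4 = 2 by
        rw [show (4:ℝ) = 2 ^ 2 by norm_num, Real.sqrt_sq (by norm_num)]]
    calc 2 / Real.sqrt (s k) = Real.sqrt (4 / (a + b)) := by rw [h4]
      _ ≤ Real.sqrt (1 / a + 1 / b) := Real.sqrt_le_sqrt key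
  -- put it together
  have hsum : ∑ k : Fin n, (2 / Real.sqrt (s k))
      ≤ ∑ k : Fin n, Real.sqrt (1 / p (Fin.castSucc k) + 1 / p (Fin.succ k)) :=
    Finset.sum_le_sum fun k _ => hterm k
  have hfinal : ((n : ℝ)) * Real.sqrt (2 * (n : ℝ)) < ∑ k : Fin n, (2 / Real.sqrt (s k)) := by
    have h2A : ∑ k : Fin n, (2 / Real.sqrt (s k)) = 2 * ∑ k, 1 / Real.sqrt (s k) := by
      rw [Finset.mul_sum]; apply Finset.sum_congr rfl; intro k _; ring
    rw [h2A]
    have hstep : (n : ℝ) ^ 2 / Real.sqrt ((n : ℝ) * 2) < (n : ℝ) ^ 2 / B := by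
      apply div_lt_div_of_pos_left _ hBpos hBlt
      positivity
    have hnn : (0:ℝ) < n := by exact_mod_cast Nat.pos_of_ne_zero (by omega)
    have hval : (n : ℝ) ^ 2 / Real.sqrt ((n : ℝ) * 2) = (n : ℝ) * Real.sqrt (2 * (n : ℝ)) / 2 := by
      rw [mul_comm (n:ℝ) 2]
      have ht2 : Real.sqrt (2 * (n:ℝ)) ^ 2 = 2 * (n:ℝ) := Real.sq_sqrt (by positivity)
      have hpos : 0 < Real.sqrt (2 * (n:ℝ)) := Real.sqrt_pos.mpr (by positivity)
      rw [div_eq_div_iff hpos.ne' (by norm_num : (2:ℝ) ≠ 0)]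
      nlinarith [ht2]
    have := hstep.trans_le hA
    rw [hval] at this
    linarith
  -- translate goal
  have hgoal : ∑ k : Fin (n + 1 - 1),
        Real.sqrt (1 / p ⟨k.1, by have := k.isLt; omega⟩
          + 1 / p ⟨k.1 + 1, by have := k.isLt; omega⟩)
      = ∑ k : Fin n, Real.sqrt (1 / p (Fin.castSucc k) + 1 / p (Fin.succ k)) := rfl
  rw [gt_iff_lt, hgoal]
  have hcast : ((n : ℝ) + 1) - 1 = (n : ℝ) := by ring
  calc ((↑(n+1) : ℝ) - 1) * Real.sqrt (2 * ((↑(n+1) : ℝ) - 1))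
      = (n : ℝ) * Real.sqrt (2 * (n : ℝ)) := by push_cast; rw [hcast]
    _ < ∑ k : Fin n, (2 / Real.sqrt (s k)) := hfinal
    _ ≤ _ := hsum
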